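/- For a finite poset (P,<), the simplices O(P,≺), as ≺ ranges over all linearizations of <, cover the order polytope O(P,<), and the interiors of distinct simplices O(P,≺), O(P,≺') are disjoint. -/

import Mathlib

/-- The order polytope of a (strict) order relation `lt` on a finite set `P`. -/
def orderPolytope {P : Type*} [Fintype P] (lt : P → P → Prop) : Set (P → ℝ) :=
  {x | (∀ p, 0 ≤ x p ∧ x p ≤ 1) ∧ ∀ p q, lt p q → x q ≤ x p}

lemma tri_of_or {α : Type*} {r : α → α → Prop} {a b : α} (H : r a b ∨ a = b ∨ r b a) :
    ¬ r a b → ¬ r b a → a = b := fun h1 h2 =>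
  H.elim (fun h => absurd h h1) (fun h => h.elim id (fun h => absurd h h2))

/-- Szpilrajn for strict orders: a strict order extends to a strict total order. -/
lemma exists_strict_total_ext {P : Type*} (lt : P → P → Prop) (h : IsStrictOrder P lt) :
    ∃ t : P → P → Prop, IsStrictTotalOrder P t ∧ ∀ p q, lt p q → t p q := by
  classical
  let r : P → P → Prop := fun p q => lt p q ∨ p = q
  have hirr : ∀ p, ¬ lt p p := fun p => h.irrefl p
  have htr : ∀ {a b c}, lt a b → lt b c → lt a c := fun hab hbc => h.trans _ _ _ hab hbc
  haveI : IsPartialOrder P r :=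
    { refl := fun a => Or.inr rfl
      trans := by
        rintro a b c (hab | rfl) (hbc | rfl)
        · exact Or.inl (htr hab hbc)
        · exact Or.inl hab
        · exact Or.inl hbc
        · exact Or.inr rfl
      antisymm := by
        rintro a b (hab | rfl) hba
        · rcases hba with hba | rfl
          · exact absurd (htr hab hba) (hirr a)
          · exact absurd hab (hirr _)
        · rfl }
  obtain ⟨s, hs, hrs⟩ := extend_partialOrder r
  refine ⟨fun p q => s p q ∧ p ≠ q, { trichotomous := ?_, irrefl := ?_, trans := ?_ }, ?_⟩
  · intro a b
    refine tri_of_or (r := fun p q => s p q ∧ p ≠ q) (a := a) (b := b) ?_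
    by_cases hab : a = b
    · exact Or.inr (Or.inl hab)
    · rcases hs.total a b with hsab | hsba
      · exact Or.inl ⟨hsab, hab⟩
      · exact Or.inr (Or.inr ⟨hsba, Ne.symm hab⟩)
  · exact fun a ha => ha.2 rfl
  · rintro a b c ⟨hab, hab'⟩ ⟨hbc, hbc'⟩
    refine ⟨hs.trans _ _ _ hab hbc, ?_⟩
    rintro rfl
    exact hab' (hs.antisymm _ _ hab hbc)
  · intro p q hpq
    refine ⟨hrs p q (Or.inl hpq), ?_⟩
    rintro rfl
    exact hirr p hpq

lemma interior_strict {P : Type*} [Fintype P] (s : P → P → Prop)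
    (hs : IsStrictTotalOrder P s) {x : P → ℝ}
    (hx : x ∈ interior (orderPolytope s)) {p q : P} (hpq : s p q) : x q < x p := by
  classical
  have hxm : x ∈ orderPolytope s := interior_subset hx
  rcases lt_or_eq_of_le (hxm.2 p q hpq) with hlt | heq
  · exact hlt
  · exfalso
    rw [mem_interior_iff_mem_nhds, Metric.mem_nhds_iff] at hx
    obtain ⟨ε, hε, hball⟩ := hx
    have hpq' : p ≠ q := by rintro rfl; exact hs.irrefl p hpq
    set y : P → ℝ := Function.update x q (x q + ε / 2) with hy
    have hyb : y ∈ Metric.ball x ε := by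
      rw [Metric.mem_ball, dist_pi_lt_iff hε]
      intro i
      by_cases hi : i = q
      · subst hi
        simp [hy, Real.dist_eq, abs_of_pos hε]
        linarith
      · simp [hy, Function.update_of_ne hi, hε]
    have hym := hball hyb
    have := hym.2 p q hpq
    have hyq : y q = x q + ε / 2 := by simp [hy]
    have hyp : y p = x p := by simp [hy, Function.update_of_ne hpq']
    rw [hyq, hyp, ← heq] at this
    linarith

/-- The simplices `O(P,≺)`, as `≺` ranges over all linearizations of `<`, cover the
order polytope `O(P,<)`, and the interiors of distinct such simplices are disjoint. -/
theorem stmt10 {P : Type*} [Fintype P] (lt : P → P → Prop) (h : IsStrictOrder P lt) :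
    (orderPolytope lt = ⋃ slt ∈ {s : P → P → Prop |
        IsStrictTotalOrder P s ∧ ∀ p q, lt p q → s p q}, orderPolytope slt) ∧
    ∀ s s' : P → P → Prop,
      (IsStrictTotalOrder P s ∧ ∀ p q, lt p q → s p q) →
      (IsStrictTotalOrder P s' ∧ ∀ p q, lt p q → s' p q) → s ≠ s' →
      interior (orderPolytope s) ∩ interior (orderPolytope s') = ∅ := by
  classical
  obtain ⟨t, ht, hlt⟩ := exists_strict_total_ext lt h
  constructor
  · apply Set.Subset.antisymm
    · intro x hx
      -- build linearization adapted to x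
      set s : P → P → Prop := fun p q => x q < x p ∨ (x q = x p ∧ t p q) with hsdef
      have hstot : IsStrictTotalOrder P s := by
        refine { trichotomous := ?_, irrefl := ?_, trans := ?_ }
        · intro a b
          refine tri_of_or (a := a) (b := b) ?_
          by_cases hab : a = b
          · exact Or.inr (Or.inl hab)
          · rcases lt_trichotomy (x b) (x a) with hl | he | hg
            · exact Or.inl (Or.inl hl)
            · rcases (haveI := ht; trichotomous (r := t) a b) with htab | rfl | htba
              · exact Or.inl (Or.inr ⟨he, htab⟩)
              · exact absurd rfl hab
              · exact Or.inr (Or.inr (Or.inr ⟨he.symm, htba⟩))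
            · exact Or.inr (Or.inr (Or.inl hg))
        · rintro a (ha | ⟨_, ha⟩)
          · exact lt_irrefl _ ha
          · exact ht.irrefl a ha
        · rintro a b c (hab | ⟨hab, hab'⟩) (hbc | ⟨hbc, hbc'⟩)
          · exact Or.inl (hbc.trans hab)
          · exact Or.inl (hbc ▸ hab)
          · exact Or.inl (hab ▸ hbc)
          · exact Or.inr ⟨hbc.trans hab, ht.trans _ _ _ hab' hbc'⟩
      have hsext : ∀ p q, lt p q → s p q := by
        intro p q hpq
        rcases lt_or_eq_of_le (hx.2 p q hpq) with hl | he
        · exact Or.inl hl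
        · exact Or.inr ⟨he, hlt p q hpq⟩
      refine Set.mem_iUnion₂.mpr ⟨s, ⟨hstot, hsext⟩, hx.1, ?_⟩
      rintro p q (hl | ⟨he, _⟩)
      · exact hl.le
      · exact he.le
    · intro x hx
      obtain ⟨slt, ⟨_, hext⟩, hxm⟩ := Set.mem_iUnion₂.mp hx
      exact ⟨hxm.1, fun p q hpq => hxm.2 p q (hext p q hpq)⟩
  · intro s s' ⟨hs, _⟩ ⟨hs', _⟩ hne
    by_contra hint
    obtain ⟨x, hx1, hx2⟩ := Set.nonempty_iff_ne_empty.mpr hint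
    apply hne
    funext p q
    apply propext
    by_cases hpq : p = q
    · subst hpq
      exact ⟨fun hh => absurd hh (hs.irrefl p), fun hh => absurd hh (hs'.irrefl p)⟩
    constructor
    · intro hh
      rcases (haveI := hs'; trichotomous (r := s') p q) with h' | rfl | h'
      · exact h'
      · exact absurd rfl hpq
      · exact absurd (interior_strict s hs hx1 hh)
          (not_lt.mpr (interior_strict s' hs' hx2 h').le)
    · intro hh
      rcases (haveI := hs; trichotomous (r := s) p q) with h' | rfl | h'
      · exact h'
      · exact absurd rfl hpq
      · exact absurd (interior_strict s' hs' hx2 hh)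
          (not_lt.mpr (interior_strict s hs hx1 h').le)
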